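/- arXiv:1108.5114 — 3 statements merged into one kernel-verified Lean document; each statement's English description precedes it below -/
import Mathlib

section
/- Let n be odd, F a field of characteristic ≠ 2, G = GL_n(F), and let L ⊆ M_n(F) be a subring that is a field extension of F of odd degree. If θ is an involution of G of the form θ(g) = ν^{-1}·ᵗg^{-1}·ν for some symmetric ν ∈ G, and θ(L^×) = L^×, then θ(t) = t^{-1} for all t ∈ L^×. -/
open Matrix

/-- Let `n` be odd, `F` a field of characteristic `≠ 2`, `G = GL_n(F)`, and
`L ⊆ M_n(F)` a subring that is a field extension of `F` of odd degree. If
`θ(g) = ν⁻¹·ᵀg⁻¹·ν` (with `ν ∈ G` symmetric) is an involution of `G` with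
`θ(L^×) = L^×`, then `θ(t) = t⁻¹` for all `t ∈ L^×`. -/
theorem stmt12 (F : Type*) [Field F] (h2 : (2 : F) ≠ 0) {n : ℕ} (hn : Odd n)
    (L : Subalgebra F (Matrix (Fin n) (Fin n) F))
    (hL : IsField L) (hLodd : Odd (Module.finrank F L))
    (ν : Matrix (Fin n) (Fin n) F) (hν : νᵀ = ν) (hνdet : IsUnit ν.det)
    (hstab : (fun x : Matrix (Fin n) (Fin n) F => ν⁻¹ * (xᵀ)⁻¹ * ν) ''
        {x | x ∈ L ∧ IsUnit x} = {x | x ∈ L ∧ IsUnit x}) :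
    ∀ t : Matrix (Fin n) (Fin n) F, t ∈ L → IsUnit t →
      ν⁻¹ * (tᵀ)⁻¹ * ν = t⁻¹ := by
  classical
  haveI : Nonempty (Fin n) := Fin.pos_iff_nonempty.mp hn.pos
  -- the linear map σ(x) = ν⁻¹ * xᵀ * ν
  set σ : Matrix (Fin n) (Fin n) F →ₗ[F] Matrix (Fin n) (Fin n) F :=
    { toFun := fun x => ν⁻¹ * xᵀ * ν
      map_add' := fun a b => by
        simp [Matrix.transpose_add, Matrix.mul_add, Matrix.add_mul]
      map_smul' := fun c a => by
        simp [Matrix.transpose_smul, mul_smul_comm, smul_mul_assoc] } with hσdef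
  have hσ : ∀ x, σ x = ν⁻¹ * xᵀ * ν := fun _ => rfl
  have hσσ : ∀ x, σ (σ x) = x := by
    intro x
    rw [hσ, hσ]
    simp [Matrix.transpose_mul, Matrix.transpose_nonsing_inv, hν, Matrix.mul_assoc,
      Matrix.nonsing_inv_mul ν hνdet, Matrix.nonsing_inv_mul_cancel_left ν x hνdet]
  have hσmul : ∀ a b, σ (a * b) = σ b * σ a := by
    intro a b
    rw [hσ, hσ, hσ]
    simp [Matrix.transpose_mul, Matrix.mul_assoc,
      Matrix.mul_nonsing_inv_cancel_left ν _ hνdet]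
  -- field structure facts about L
  have hcomm : ∀ a b : Matrix (Fin n) (Fin n) F, a ∈ L → b ∈ L → a * b = b * a := by
    intro a b ha hb
    have h := hL.mul_comm (⟨a, ha⟩ : L) ⟨b, hb⟩
    exact congrArg Subtype.val h
  have hfield : ∀ x : Matrix (Fin n) (Fin n) F, x ∈ L → x ≠ 0 →
      ∃ b ∈ L, x * b = 1 ∧ b * x = 1 := by
    intro x hx hx0
    have hne : (⟨x, hx⟩ : L) ≠ 0 := fun h => hx0 (congrArg Subtype.val h)
    obtain ⟨b, hb⟩ := hL.mul_inv_cancel hne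
    refine ⟨(b : Matrix (Fin n) (Fin n) F), b.2, ?_, ?_⟩
    · exact congrArg Subtype.val hb
    · have := hcomm x b hx b.2
      rw [← this]
      exact congrArg Subtype.val hb
  have hunitL : ∀ x : Matrix (Fin n) (Fin n) F, x ∈ L → x ≠ 0 → IsUnit x := by
    intro x hx hx0
    obtain ⟨b, _, h1, h2'⟩ := hfield x hx hx0
    exact ⟨⟨x, b, h1, h2'⟩, rfl⟩
  have hinvL : ∀ x : Matrix (Fin n) (Fin n) F, x ∈ L → IsUnit x →
      x⁻¹ ∈ L := by
    intro x hx hu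
    have hx0 : x ≠ 0 := hu.ne_zero
    obtain ⟨b, hbL, h1, _⟩ := hfield x hx hx0
    rw [Matrix.inv_eq_right_inv h1]
    exact hbL
  -- σ maps L into L
  have hσL : ∀ x : Matrix (Fin n) (Fin n) F, x ∈ L → σ x ∈ L := by
    intro x hx
    by_cases hx0 : x = 0
    · subst hx0; simpa [hσ] using L.zero_mem
    · have hu := hunitL x hx hx0
      have hθ : ν⁻¹ * (xᵀ)⁻¹ * ν ∈ {x | x ∈ L ∧ IsUnit x} := by
        rw [← hstab]; exact ⟨x, ⟨hx, hu⟩, rfl⟩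
      have hxT : IsUnit (xᵀ).det := by
        rw [Matrix.det_transpose]; exact (Matrix.isUnit_iff_isUnit_det x).1 hu
      have h1 : (ν⁻¹ * (xᵀ)⁻¹ * ν)⁻¹ = σ x := by
        rw [Matrix.mul_inv_rev, Matrix.mul_inv_rev,
          Matrix.nonsing_inv_nonsing_inv _ hνdet,
          Matrix.nonsing_inv_nonsing_inv _ hxT, hσ, Matrix.mul_assoc]
      rw [← h1]
      exact hinvL _ hθ.1 hθ.2
  -- the eigenspaces
  set Vp : Submodule F (Matrix (Fin n) (Fin n) F) :=
    Subalgebra.toSubmodule L ⊓ LinearMap.ker (σ - LinearMap.id) with hVpdef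
  set Vm : Submodule F (Matrix (Fin n) (Fin n) F) :=
    Subalgebra.toSubmodule L ⊓ LinearMap.ker (σ + LinearMap.id) with hVmdef
  have hVp : ∀ z, z ∈ Vp ↔ z ∈ L ∧ σ z = z := by
    intro z
    simp [hVpdef, Submodule.mem_inf, LinearMap.mem_ker, LinearMap.sub_apply,
      sub_eq_zero, Subalgebra.mem_toSubmodule]
  have hVm : ∀ z, z ∈ Vm ↔ z ∈ L ∧ σ z = -z := by
    intro z
    simp [hVmdef, Submodule.mem_inf, LinearMap.mem_ker, LinearMap.add_apply,
      add_eq_zero_iff_eq_neg, Subalgebra.mem_toSubmodule]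
  -- the key claim: σ is the identity on L
  have key : ∀ x ∈ L, σ x = x := by
    by_contra hcon
    push_neg at hcon
    obtain ⟨x, hx, hxne⟩ := hcon
    set y := x - σ x with hy
    have hyL : y ∈ L := sub_mem hx (hσL x hx)
    have hy0 : y ≠ 0 := sub_ne_zero.2 (Ne.symm hxne)
    have hyu : IsUnit y := hunitL y hyL hy0
    have hσy : σ y = -y := by
      rw [hy, map_sub, hσσ, neg_sub]
    -- multiplication by y
    set g : Matrix (Fin n) (Fin n) F →ₗ[F] Matrix (Fin n) (Fin n) F :=
      LinearMap.mulLeft F y with hgdef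
    have hg : ∀ z, g z = y * z := fun _ => rfl
    have hginj : Function.Injective g := by
      intro a b hab
      rw [hg, hg] at hab
      exact hyu.mul_left_cancel hab
    have hmapPM : ∀ z ∈ Vp, g z ∈ Vm := by
      intro z hz
      obtain ⟨hzL, hzσ⟩ := (hVp z).1 hz
      rw [hVm, hg]
      refine ⟨mul_mem hyL hzL, ?_⟩
      rw [hσmul, hzσ, hσy, hcomm z (-y) hzL (neg_mem hyL)]
      simp [mul_neg, neg_mul]
    have hmapMP : ∀ z ∈ Vm, g z ∈ Vp := by
      intro z hz
      obtain ⟨hzL, hzσ⟩ := (hVm z).1 hz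
      rw [hVp, hg]
      refine ⟨mul_mem hyL hzL, ?_⟩
      rw [hσmul, hzσ, hσy, hcomm (-z) (-y) (neg_mem hzL) (neg_mem hyL)]
      simp [mul_neg, neg_mul]
    have hrinj : ∀ (p q : Submodule F (Matrix (Fin n) (Fin n) F))
        (hpq : ∀ z ∈ p, g z ∈ q), Function.Injective (LinearMap.restrict g hpq) := by
      intro p q hpq a b hab
      apply Subtype.ext
      apply hginj
      simpa [LinearMap.restrict_apply] using congrArg Subtype.val hab
    have hle1 : Module.finrank F Vp ≤ Module.finrank F Vm :=
      LinearMap.finrank_le_finrank_of_injective (hrinj _ _ hmapPM)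
    have hle2 : Module.finrank F Vm ≤ Module.finrank F Vp :=
      LinearMap.finrank_le_finrank_of_injective (hrinj _ _ hmapMP)
    have heq : Module.finrank F Vp = Module.finrank F Vm := le_antisymm hle1 hle2
    -- sup and inf
    have hsupeq : Vp ⊔ Vm = Subalgebra.toSubmodule L := by
      apply le_antisymm
      · refine sup_le ?_ ?_
        · intro z hz; exact ((hVp z).1 hz).1
        · intro z hz; exact ((hVm z).1 hz).1
      · intro z hz
        rw [Subalgebra.mem_toSubmodule] at hz
        have hσz : σ z ∈ L := hσL z hz
        refine Submodule.mem_sup.2 ⟨(2:F)⁻¹ • (z + σ z), ?_, (2:F)⁻¹ • (z - σ z), ?_, ?_⟩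
        · rw [hVp]
          refine ⟨L.smul_mem (add_mem hz hσz) _, ?_⟩
          rw [_root_.map_smul, map_add, hσσ, add_comm]
        · rw [hVm]
          refine ⟨L.smul_mem (sub_mem hz hσz) _, ?_⟩
          rw [_root_.map_smul, map_sub, hσσ, ← smul_neg, neg_sub]
        · rw [← smul_add]
          have hzz : (z + σ z) + (z - σ z) = (2:F) • z := by
            rw [two_smul]; abel
          rw [hzz, smul_smul, inv_mul_cancel₀ h2, one_smul]
    have hinf : Vp ⊓ Vm = ⊥ := by
      rw [eq_bot_iff]
      intro z hz
      obtain ⟨hz1, hz2⟩ := Submodule.mem_inf.1 hz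
      have e1 := ((hVp z).1 hz1).2
      have e2 := ((hVm z).1 hz2).2
      have : (2:F) • z = 0 := by
        rw [two_smul]
        nth_rewrite 1 [← e1]
        rw [e2]; abel
      rcases smul_eq_zero.1 this with h | h
      · exact absurd h h2
      · simpa using h
    have hdim := Submodule.finrank_sup_add_finrank_inf_eq Vp Vm
    rw [hsupeq, hinf] at hdim
    simp only [finrank_bot, add_zero] at hdim
    rw [Subalgebra.finrank_toSubmodule] at hdim
    rw [hdim, heq] at hLodd
    obtain ⟨k, hk⟩ := hLodd
    omega
  -- conclude
  intro t ht htu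
  have h := key t ht
  rw [hσ] at h
  have : t⁻¹ = (ν⁻¹ * tᵀ * ν)⁻¹ := by rw [h]
  rw [this, Matrix.mul_inv_rev, Matrix.mul_inv_rev,
    Matrix.nonsing_inv_nonsing_inv _ hνdet, Matrix.mul_assoc]
end

section
/- Let E/F be a finite separable extension of degree n with a fixed F-basis, T = {regular representation matrices of elements of E^×} ⊆ GL_n(F). The map a ↦ θ^a (where θ^a = θ_{ν^a} with ν^a the Gram matrix of the trace form of a) is a bijection from E^×/F^× to the set of orthogonal involutions θ of GL_n(F) for which T is θ-split (i.e., θ(t) = t^{-1} for all t ∈ T). -/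
open Matrix

variable (F E : Type*) [Field F] [Field E] [Algebra F E]

/-- The Gram matrix `ν^a` of the trace form `⟨x,y⟩_a = tr_{E/F}(a·x·y)` with respect
to the basis `e`. -/
noncomputable def gramMat [FiniteDimensional F E] {n : ℕ} (e : Module.Basis (Fin n) F E)
    (a : E) : Matrix (Fin n) (Fin n) F :=
  Matrix.of fun i j => Algebra.trace F E (a * e i * e j)

/-- The orthogonal involution `θ_ν(g) = ν⁻¹ · ᵀg⁻¹ · ν` of `GL_n(F)`. -/
noncomputable def thetaMat {F : Type*} [Field F] {n : ℕ} (ν g : Matrix (Fin n) (Fin n) F) :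
    Matrix (Fin n) (Fin n) F :=
  ν⁻¹ * (gᵀ)⁻¹ * ν

section Helpers

variable [FiniteDimensional F E] {n : ℕ} (e : Module.Basis (Fin n) F E)

omit [FiniteDimensional F E] in
/-- A matrix that commutes with every invertible matrix is scalar. -/
lemma comm_all_scalar {P : Matrix (Fin n) (Fin n) F}
    (h : ∀ g : Matrix (Fin n) (Fin n) F, IsUnit g.det → g * P = P * g) :
    ∃ c : F, P = c • 1 := by
  have hPW : Pairwise fun i j => Commute (Matrix.single i j 1) P := by
    intro i j hij
    have hT := h (Matrix.transvection i j 1)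
      (by rw [Matrix.det_transvection_of_ne i j hij]; exact isUnit_one)
    unfold Matrix.transvection at hT
    rw [add_mul, mul_add, one_mul, mul_one] at hT
    exact add_left_cancel hT
  obtain ⟨c, hc⟩ := Matrix.mem_range_scalar_of_commute_single (M := P) hPW
  refine ⟨c, ?_⟩
  rw [← hc]
  ext i j
  by_cases hij : i = j <;>
    simp [hij, Matrix.scalar_apply, Matrix.diagonal_apply, Matrix.one_apply]

lemma grams (a : E) :
    Algebra.traceMatrix F e * Algebra.leftMulMatrix e a = gramMat F E e a := by
  ext i j
  have h : a * e i * e j = e i * (a * e j) := by ring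
  rw [Matrix.mul_apply, gramMat, Matrix.of_apply, h]
  conv_rhs => rw [← Module.Basis.sum_repr e (a * e j)]
  rw [Finset.mul_sum, map_sum]
  refine Finset.sum_congr rfl fun k _ => ?_
  rw [Algebra.traceMatrix, Matrix.of_apply, Algebra.traceForm_apply,
    Algebra.leftMulMatrix_eq_repr_mul, mul_smul_comm, _root_.map_smul, smul_eq_mul, mul_comm]

lemma grams' (a : E) :
    (Algebra.leftMulMatrix e a)ᵀ * Algebra.traceMatrix F e = gramMat F E e a := by
  ext i j
  rw [Matrix.mul_apply, gramMat, Matrix.of_apply]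
  conv_rhs => rw [show a * e i * e j = (a * e i) * e j from rfl,
    ← Module.Basis.sum_repr e (a * e i)]
  rw [Finset.sum_mul, map_sum]
  refine Finset.sum_congr rfl fun k _ => ?_
  rw [Matrix.transpose_apply, Algebra.traceMatrix, Matrix.of_apply, Algebra.traceForm_apply,
    Algebra.leftMulMatrix_eq_repr_mul, smul_mul_assoc, _root_.map_smul, smul_eq_mul]

lemma symm_key (x : E) :
    (Algebra.leftMulMatrix e x)ᵀ * Algebra.traceMatrix F e =
      Algebra.traceMatrix F e * Algebra.leftMulMatrix e x :=
  (grams' F E e x).trans (grams F E e x).symm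

omit [FiniteDimensional F E] in
/-- If `Mᵀ ν = ν M` with `ν` invertible then `θ_ν(M) = M⁻¹`. -/
lemma theta_of_comm {ν M : Matrix (Fin n) (Fin n) F} (hν : IsUnit ν.det)
    (h : Mᵀ * ν = ν * M) : thetaMat ν M = M⁻¹ := by
  have h2 : (Mᵀ * ν)⁻¹ = (ν * M)⁻¹ := by rw [h]
  rw [Matrix.mul_inv_rev, Matrix.mul_inv_rev] at h2
  unfold thetaMat
  rw [h2, mul_assoc, Matrix.nonsing_inv_mul _ hν, mul_one]

omit [FiniteDimensional F E] in
/-- Conversely, if `θ_ν(M) = M⁻¹` with `ν, M` invertible then `Mᵀ ν = ν M`. -/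
lemma comm_of_theta {ν M : Matrix (Fin n) (Fin n) F} (hν : IsUnit ν.det)
    (hM : IsUnit M.det) (h : thetaMat ν M = M⁻¹) : Mᵀ * ν = ν * M := by
  unfold thetaMat at h
  have h2 : (ν⁻¹ * (Mᵀ)⁻¹ * ν)⁻¹ = (M⁻¹)⁻¹ := by rw [h]
  have hMT : IsUnit (Mᵀ).det := by rwa [Matrix.det_transpose]
  rw [Matrix.mul_inv_rev, Matrix.mul_inv_rev, Matrix.nonsing_inv_nonsing_inv _ hMT,
    Matrix.nonsing_inv_nonsing_inv _ hν, Matrix.nonsing_inv_nonsing_inv _ hM] at h2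
  -- h2 : ν⁻¹ * (Mᵀ * ν) = M
  have h3 := congrArg (fun X => ν * X) h2
  simp only [← mul_assoc] at h3
  rwa [Matrix.mul_nonsing_inv _ hν, one_mul] at h3

omit [FiniteDimensional F E] in
lemma conj_eq_comm {νa νb h : Matrix (Fin n) (Fin n) F} (ha : IsUnit νa.det)
    (hb : IsUnit νb.det) (H : νa⁻¹ * h * νa = νb⁻¹ * h * νb) :
    h * (νa * νb⁻¹) = (νa * νb⁻¹) * h := by
  have H2 := congrArg (fun X => νa * X * νb⁻¹) H
  simp only [← mul_assoc] at H2
  rw [Matrix.mul_nonsing_inv _ ha, one_mul,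
    mul_assoc (νa * νb⁻¹ * h), Matrix.mul_nonsing_inv _ hb, mul_one] at H2
  simp only [← mul_assoc]
  exact H2

variable [Algebra.IsSeparable F E]

lemma traceMat_unit : IsUnit (Algebra.traceMatrix F e).det := by
  rw [← Algebra.discr_def]
  exact Algebra.discr_isUnit_of_basis F e

omit [Algebra.IsSeparable F E] in
lemma lmul_unit {x : E} (hx : x ≠ 0) : IsUnit (Algebra.leftMulMatrix e x).det := by
  rw [← Algebra.norm_eq_matrix_det]
  exact ((Algebra.norm_ne_zero_iff).mpr hx).isUnit

lemma gram_unit {a : E} (ha : a ≠ 0) : IsUnit (gramMat F E e a).det := by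
  rw [← grams, Matrix.det_mul]
  exact (traceMat_unit F E e).mul (lmul_unit F E e ha)

omit [Algebra.IsSeparable F E] in
lemma gram_comm (a x : E) :
    (Algebra.leftMulMatrix e x)ᵀ * gramMat F E e a
      = gramMat F E e a * Algebra.leftMulMatrix e x := by
  rw [← grams]
  calc (Algebra.leftMulMatrix e x)ᵀ * (Algebra.traceMatrix F e * Algebra.leftMulMatrix e a)
      = ((Algebra.leftMulMatrix e x)ᵀ * Algebra.traceMatrix F e) * Algebra.leftMulMatrix e a :=
        (mul_assoc _ _ _).symm
    _ = (Algebra.traceMatrix F e * Algebra.leftMulMatrix e x) * Algebra.leftMulMatrix e a := by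
        rw [symm_key]
    _ = Algebra.traceMatrix F e * (Algebra.leftMulMatrix e x * Algebra.leftMulMatrix e a) :=
        mul_assoc _ _ _
    _ = Algebra.traceMatrix F e * (Algebra.leftMulMatrix e a * Algebra.leftMulMatrix e x) := by
        rw [← _root_.map_mul, ← _root_.map_mul, mul_comm x a]
    _ = (Algebra.traceMatrix F e * Algebra.leftMulMatrix e a) * Algebra.leftMulMatrix e x :=
        (mul_assoc _ _ _).symm

omit [FiniteDimensional F E] [Algebra.IsSeparable F E] in
lemma exists_lmul {C : Matrix (Fin n) (Fin n) F}
    (hC : ∀ x : E, C * Algebra.leftMulMatrix e x = Algebra.leftMulMatrix e x * C) :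
    ∃ a : E, C = Algebra.leftMulMatrix e a := by
  refine ⟨Matrix.toLin e e C 1, ?_⟩
  have hlin : Matrix.toLin e e C = Algebra.lmul F E (Matrix.toLin e e C 1) := by
    apply LinearMap.ext; intro y
    have h3 : Matrix.toLin e e (C * Algebra.leftMulMatrix e y)
        = Matrix.toLin e e (Algebra.leftMulMatrix e y * C) := by rw [hC y]
    rw [Matrix.toLin_mul e e e, Matrix.toLin_mul e e e,
      Algebra.leftMulMatrix_apply, Matrix.toLin_toMatrix] at h3
    have h4 := congrArg (fun f => f 1) h3
    simp only [LinearMap.coe_comp, Function.comp_apply, Algebra.coe_lmul_eq_mul,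
      LinearMap.mul_apply', mul_one] at h4 ⊢
    rw [h4]
    exact mul_comm _ _
  rw [Algebra.leftMulMatrix_apply, ← hlin, LinearMap.toMatrix_toLin]

end Helpers

/-- Let `E/F` be a finite separable extension of degree `n` with `F`-basis `e`, and
let `T ⊆ GL_n(F)` be the image of `E^×` under the regular representation. The map
`a ↦ θ^a = θ_{ν^a}` is a bijection from `E^×/F^×` onto the set of orthogonal
involutions `θ` of `GL_n(F)` for which `T` is `θ`-split:
(1) each `θ^a` splits `T`; (2) `θ^a = θ^b` (on `GL_n(F)`) only if `a, b` agree up to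
`F^×`; (3) every orthogonal involution splitting `T` equals some `θ^a`. -/
theorem stmt13 [FiniteDimensional F E] [Algebra.IsSeparable F E] {n : ℕ}
    (e : Module.Basis (Fin n) F E) :
    (∀ a : E, a ≠ 0 → ∀ x : E, x ≠ 0 →
      thetaMat (gramMat F E e a) (Algebra.leftMulMatrix e x) =
        (Algebra.leftMulMatrix e x)⁻¹) ∧
    (∀ a b : E, a ≠ 0 → b ≠ 0 →
      (∀ g : Matrix (Fin n) (Fin n) F, IsUnit g.det →
        thetaMat (gramMat F E e a) g = thetaMat (gramMat F E e b) g) →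
      ∃ c : F, c ≠ 0 ∧ a = algebraMap F E c * b) ∧
    (∀ ν : Matrix (Fin n) (Fin n) F, νᵀ = ν → IsUnit ν.det →
      (∀ x : E, x ≠ 0 →
        thetaMat ν (Algebra.leftMulMatrix e x) = (Algebra.leftMulMatrix e x)⁻¹) →
      ∃ a : E, a ≠ 0 ∧ ∀ g : Matrix (Fin n) (Fin n) F, IsUnit g.det →
        thetaMat ν g = thetaMat (gramMat F E e a) g) := by
  have hBm := traceMat_unit F E e
  refine ⟨?_, ?_, ?_⟩
  · -- (1)
    intro a ha x hx
    exact theta_of_comm F (gram_unit F E e ha) (gram_comm F E e a x)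
  · -- (2)
    intro a b ha hb hth
    have hA := gram_unit F E e ha
    have hB := gram_unit F E e hb
    have hcom : ∀ g : Matrix (Fin n) (Fin n) F, IsUnit g.det →
        g * (gramMat F E e a * (gramMat F E e b)⁻¹)
          = (gramMat F E e a * (gramMat F E e b)⁻¹) * g := by
      intro h hh
      have hg : IsUnit ((h⁻¹)ᵀ).det := by
        rw [Matrix.det_transpose]; exact Matrix.isUnit_nonsing_inv_det _ hh
      have hthis := hth ((h⁻¹)ᵀ) hg
      unfold thetaMat at hthis
      rw [Matrix.transpose_transpose, Matrix.nonsing_inv_nonsing_inv _ hh] at hthis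
      exact conj_eq_comm F hA hB hthis
    obtain ⟨c, hP⟩ := comm_all_scalar F hcom
    haveI hne : Nonempty (Fin n) := e.index_nonempty
    have hνa : gramMat F E e a = c • gramMat F E e b := by
      have h1 : gramMat F E e a * (gramMat F E e b)⁻¹ * gramMat F E e b
          = (c • 1) * gramMat F E e b := by rw [hP]
      rwa [mul_assoc, Matrix.nonsing_inv_mul _ hB, mul_one, smul_mul_assoc, one_mul] at h1
    have hc0 : c ≠ 0 := by
      rintro rfl
      rw [zero_smul] at hνa
      rw [hνa, Matrix.det_zero] at hA
      exact hA.ne_zero rfl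
    refine ⟨c, hc0, Algebra.leftMulMatrix_injective e ?_⟩
    have hsm : Algebra.leftMulMatrix e (algebraMap F E c * b)
        = c • Algebra.leftMulMatrix e b := by
      rw [_root_.map_mul, AlgHom.commutes, Algebra.algebraMap_eq_smul_one,
        smul_mul_assoc, one_mul]
    have h1 : Algebra.traceMatrix F e * Algebra.leftMulMatrix e a
        = Algebra.traceMatrix F e * (c • Algebra.leftMulMatrix e b) := by
      rw [mul_smul_comm, grams, grams]
      exact hνa
    have h2 := congrArg (fun X => (Algebra.traceMatrix F e)⁻¹ * X) h1
    simp only [← mul_assoc] at h2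
    rw [Matrix.nonsing_inv_mul _ hBm, one_mul, one_mul] at h2
    rw [h2, hsm]
  · -- (3)
    intro ν hsym hν hsp
    have key : ∀ x : E, (Algebra.leftMulMatrix e x)ᵀ * ν = ν * Algebra.leftMulMatrix e x := by
      intro x
      rcases eq_or_ne x 0 with rfl | hx
      · simp
      · exact comm_of_theta F hν (lmul_unit F E e hx) (hsp x hx)
    have hCcomm : ∀ x : E,
        ((Algebra.traceMatrix F e)⁻¹ * ν) * Algebra.leftMulMatrix e x
          = Algebra.leftMulMatrix e x * ((Algebra.traceMatrix F e)⁻¹ * ν) := by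
      intro x
      have h1 : (Algebra.traceMatrix F e)⁻¹ * (Algebra.leftMulMatrix e x)ᵀ
          = Algebra.leftMulMatrix e x * (Algebra.traceMatrix F e)⁻¹ := by
        have h2 := congrArg
          (fun X => (Algebra.traceMatrix F e)⁻¹ * X * (Algebra.traceMatrix F e)⁻¹)
          (symm_key F E e x)
        simp only [← mul_assoc] at h2
        rwa [mul_assoc _ (Algebra.traceMatrix F e), Matrix.mul_nonsing_inv _ hBm, mul_one,
          Matrix.nonsing_inv_mul _ hBm, one_mul] at h2
      calc ((Algebra.traceMatrix F e)⁻¹ * ν) * Algebra.leftMulMatrix e x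
          = (Algebra.traceMatrix F e)⁻¹ * (ν * Algebra.leftMulMatrix e x) := mul_assoc _ _ _
        _ = (Algebra.traceMatrix F e)⁻¹ * ((Algebra.leftMulMatrix e x)ᵀ * ν) := by rw [key]
        _ = ((Algebra.traceMatrix F e)⁻¹ * (Algebra.leftMulMatrix e x)ᵀ) * ν :=
            (mul_assoc _ _ _).symm
        _ = (Algebra.leftMulMatrix e x * (Algebra.traceMatrix F e)⁻¹) * ν := by rw [h1]
        _ = Algebra.leftMulMatrix e x * ((Algebra.traceMatrix F e)⁻¹ * ν) := mul_assoc _ _ _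
    obtain ⟨a, hCa⟩ := exists_lmul F E e hCcomm
    have hνgram : ν = gramMat F E e a := by
      rw [← grams, ← hCa, ← mul_assoc, Matrix.mul_nonsing_inv _ hBm, one_mul]
    have ha : a ≠ 0 := by
      intro h0
      haveI : Nonempty (Fin n) := e.index_nonempty
      have hg0 : gramMat F E e a = 0 := by
        ext i j; simp [gramMat, h0]
      rw [hνgram, hg0, Matrix.det_zero] at hν
      exact hν.ne_zero rfl
    exact ⟨a, ha, fun g _ => by rw [hνgram]⟩
end

section
/- Let G be a group, θ an automorphism of G with θ² = id, Z a θ-stable central subgroup, and let G_θ = {g ∈ G : gθ(g)^{-1} ∈ Z} and G^θ = {g : θ(g) = g}. Let Z¹ = {z ∈ Z : θ(z) = z^{-1}} and B¹ = {zθ(z)^{-1} : z ∈ Z}. Then the map g ↦ gθ(g)^{-1} induces an injective group homomorphism from G_θ/(Z·G^θ) into Z¹/B¹, and Z¹/B¹ is an elementary abelian 2-group (every element has order dividing 2). -/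
/-- Let `G` be a group, `θ` an involutive automorphism, `Z` a `θ`-stable central
subgroup, `G_θ = {g : μ(g) ∈ Z}` where `μ(g) = g·θ(g)⁻¹`, and `G^θ` the fixed
points. Then `μ` induces an injective group homomorphism
`G_θ/(Z·G^θ) → Z¹/B¹` where `Z¹ = {z ∈ Z : θ(z) = z⁻¹}`, `B¹ = {z·θ(z)⁻¹ : z ∈ Z}`,
and `Z¹/B¹` is an elementary abelian 2-group:
(1) `μ` takes values in `Z¹`; (2) `μ` is a homomorphism on `G_θ`;
(3) `μ(g) ∈ B¹` iff `g ∈ Z·G^θ` (injectivity of the induced map);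
(4) squares in `Z¹` lie in `B¹`. -/
theorem stmt16 (G : Type*) [Group G] (θ : G ≃* G) (hθ : ∀ g, θ (θ g) = g)
    (Z : Subgroup G) (hZc : Z ≤ Subgroup.center G) (hZθ : ∀ z ∈ Z, θ z ∈ Z) :
    (∀ g : G, g * (θ g)⁻¹ ∈ Z → θ (g * (θ g)⁻¹) = (g * (θ g)⁻¹)⁻¹) ∧
    (∀ g h : G, g * (θ g)⁻¹ ∈ Z → h * (θ h)⁻¹ ∈ Z →
      (g * h) * (θ (g * h))⁻¹ ∈ Z ∧
      (g * h) * (θ (g * h))⁻¹ = (g * (θ g)⁻¹) * (h * (θ h)⁻¹)) ∧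
    (∀ g : G, g * (θ g)⁻¹ ∈ Z →
      ((∃ z ∈ Z, g * (θ g)⁻¹ = z * (θ z)⁻¹) ↔
        (∃ z ∈ Z, ∃ h : G, θ h = h ∧ g = z * h))) ∧
    (∀ z ∈ Z, θ z = z⁻¹ → ∃ w ∈ Z, z * z = w * (θ w)⁻¹) := by
  have comm : ∀ a ∈ Z, ∀ b : G, a * b = b * a := fun a ha b =>
    ((Subgroup.mem_center_iff.mp (hZc ha)) b).symm
  refine ⟨?_, ?_, ?_, ?_⟩
  · intro g _
    simp [mul_inv_rev, hθ]
  · intro g h hg hh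
    have key : (g * h) * (θ (g * h))⁻¹ = (g * (θ g)⁻¹) * (h * (θ h)⁻¹) := by
      have : (g * h) * (θ (g * h))⁻¹ = g * ((h * (θ h)⁻¹) * (θ g)⁻¹) := by
        simp [mul_inv_rev, mul_assoc]
      rw [this, comm _ hh ((θ g)⁻¹)]
      group
    exact ⟨key ▸ Z.mul_mem hg hh, key⟩
  · intro g hg
    constructor
    · rintro ⟨z, hz, hgz⟩
      refine ⟨z, hz, z⁻¹ * g, ?_, by group⟩
      have hθg : θ g = θ z * z⁻¹ * g := by
        have h1 : θ g = (g * (θ g)⁻¹)⁻¹ * g := by group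
        rw [h1, hgz]; group
      rw [map_mul, map_inv, hθg]
      group
    · rintro ⟨z, hz, h, hhfix, rfl⟩
      refine ⟨z, hz, ?_⟩
      have : (z * h) * (θ (z * h))⁻¹ = z * ((h * (θ h)⁻¹) * (θ z)⁻¹) := by
        simp [mul_inv_rev, mul_assoc]
      rw [this, hhfix]
      group
  · intro z hz hzinv
    exact ⟨z, hz, by rw [hzinv]; group⟩
end
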